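/- The poset Π_{n,s+1} of vector partitions of [n] into s+1 components (with least element 0̂ adjoined) is graded: it is bounded, with greatest element ([n],...,[n]), and every maximal chain has the same length n. -/

import Mathlib

open Finset

/-- A vector partition of `[n]` into `s+1` components: a partition `P` of `[n]`
together with `s` labelings of its parts. -/
structure VPart (n s : ℕ) where
  P : Finpartition (Finset.univ : Finset (Fin n))
  w : Fin s → Finset (Fin n) → Finset (Fin n)
  card_w : ∀ i : Fin s, ∀ B ∈ P.parts, (w i B).card = B.card
  part_w : ∀ i : Fin s, ∀ x : Fin n, ∃! B, B ∈ P.parts ∧ x ∈ w i B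
  w_junk : ∀ i B, B ∉ P.parts → w i B = ∅

namespace VPart

variable {n s : ℕ}

@[ext] theorem ext' {x y : VPart n s} (hP : x.P = y.P) (hw : x.w = y.w) : x = y := by
  cases x; cases y; simp_all

/-- componentwise union-refinement order -/
instance : PartialOrder (VPart n s) where
  le x y := x.P ≤ y.P ∧
    ∀ i : Fin s, ∀ B ∈ x.P.parts, ∀ B' ∈ y.P.parts, B ⊆ B' → x.w i B ⊆ y.w i B'
  le_refl x := by
    refine ⟨le_refl _, fun i B hB B' hB' hBB' => ?_⟩
    obtain rfl : B = B' := by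
      obtain ⟨a, ha⟩ := x.P.nonempty_of_mem_parts hB
      exact x.P.eq_of_mem_parts hB hB' ha (hBB' ha)
    exact subset_rfl
  le_trans x y z hxy hyz := by
    refine ⟨le_trans hxy.1 hyz.1, fun i B hB B'' hB'' hBB'' => ?_⟩
    obtain ⟨B', hB', hBB'⟩ := hxy.1 hB
    obtain ⟨B''', hB''', hB'B'''⟩ := hyz.1 hB'
    obtain ⟨a, ha⟩ := x.P.nonempty_of_mem_parts hB
    obtain rfl : B''' = B'' :=
      z.P.eq_of_mem_parts hB''' hB'' (hB'B''' (hBB' ha)) (hBB'' ha)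
    exact subset_trans (hxy.2 i B hB B' hB' hBB') (hyz.2 i B' hB' B''' hB''' hB'B''')
  le_antisymm x y hxy hyx := by
    have hP : x.P = y.P := le_antisymm hxy.1 hyx.1
    refine ext' hP ?_
    funext i B
    by_cases hB : B ∈ x.P.parts
    · exact subset_antisymm (hxy.2 i B hB B (hP ▸ hB) subset_rfl)
        (hyx.2 i B (hP ▸ hB) B hB subset_rfl)
    · rw [x.w_junk i B hB, y.w_junk i B (hP ▸ hB)]

/-- the part of the underlying partition containing `k` -/
def partOf (x : VPart n s) (k : Fin n) : Finset (Fin n) := x.P.part k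

/-- the atom word of `x`: `atomWord x i k` is the element of the `i`-th label of the
part containing `k` whose rank in that label matches the rank of `k` in its part. -/
def atomWord (x : VPart n s) (i : Fin s) (k : Fin n) : Fin n :=
  (((x.w i (x.partOf k)).sort (· ≤ ·)).getD (((x.partOf k).filter (· < k)).card)) k

/-- `x` is an atom: all parts of the underlying partition are singletons. -/
def IsAtomic (x : VPart n s) : Prop := ∀ B ∈ x.P.parts, B.card = 1

/-- strict lexicographic order on atom words, with `i` as the major index
and `k` the minor index. -/
def wordLt (A B : Fin s → Fin n → Fin n) : Prop :=
  ∃ i k, A i k < B i k ∧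
    ∀ i' k', (i' < i ∨ (i' = i ∧ k' < k)) → A i' k' = B i' k'

def wordLe (A B : Fin s → Fin n → Fin n) : Prop := wordLt A B ∨ A = B

end VPart

section Aux

namespace VPart

variable {n s : ℕ}

lemma eq_of_le_of_P_eq {x y : VPart n s} (h : x ≤ y) (hP : x.P = y.P) : x = y := by
  refine ext' hP ?_
  funext i B
  by_cases hB : B ∈ x.P.parts
  · refine Finset.eq_of_subset_of_card_le (h.2 i B hB B (hP ▸ hB) subset_rfl) ?_
    rw [x.card_w i B hB, y.card_w i B (hP ▸ hB)]
  · rw [x.w_junk i B hB, y.w_junk i B (hP ▸ hB)]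

lemma w_disj (x : VPart n s) (i : Fin s) {B B' : Finset (Fin n)}
    (hB : B ∈ x.P.parts) (hB' : B' ∈ x.P.parts) (hne : B ≠ B') :
    Disjoint (x.w i B) (x.w i B') := by
  rw [Finset.disjoint_left]
  intro a haB haB'
  obtain ⟨C, _, hC⟩ := x.part_w i a
  exact hne ((hC B ⟨hB, haB⟩).trans (hC B' ⟨hB', haB'⟩).symm)

/-- strict refinement strictly decreases number of parts -/
lemma parts_card_lt {P Q : Finpartition (Finset.univ : Finset (Fin n))}
    (hle : P ≤ Q) (hne : P ≠ Q) : Q.parts.card < P.parts.card := by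
  classical
  set f : Finset (Fin n) → Finset (Fin n) :=
    fun B => if h : B.Nonempty then Q.part h.choose else ∅ with hf_def
  have hf : ∀ B ∈ P.parts, f B ∈ Q.parts ∧ B ⊆ f B := by
    intro B hB
    have hBne : B.Nonempty := P.nonempty_of_mem_parts hB
    obtain ⟨D, hD, hBD⟩ := hle hB
    have : f B = D := by
      rw [hf_def]
      simp only [dif_pos hBne]
      exact Q.part_eq_of_mem hD (hBD hBne.choose_spec)
    rw [this]; exact ⟨hD, hBD⟩
  have hsurj : ∀ D ∈ Q.parts, ∃ B ∈ P.parts, f B = D := by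
    intro D hD
    obtain ⟨a, ha⟩ := Q.nonempty_of_mem_parts hD
    refine ⟨P.part a, P.part_mem.2 (Finset.mem_univ a), ?_⟩
    have h1 := hf _ (P.part_mem.2 (Finset.mem_univ a))
    exact Q.eq_of_mem_parts h1.1 hD (h1.2 (P.mem_part (Finset.mem_univ a))) ha
  have hcardle : Q.parts.card ≤ P.parts.card := by
    refine Finset.card_le_card_of_surjOn f ?_
    intro D hD
    obtain ⟨B, hB, hfB⟩ := hsurj D hD
    exact ⟨B, hB, hfB⟩
  rcases lt_or_eq_of_le hcardle with h | h
  · exact h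
  · -- equality leads to P = Q, contradiction
    exfalso
    apply hne
    have hinj : ∀ ⦃B₁⦄, B₁ ∈ P.parts → ∀ ⦃B₂⦄, B₂ ∈ P.parts → f B₁ = f B₂ → B₁ = B₂ := by
      intro B₁ h₁ B₂ h₂ h12
      exact Finset.inj_on_of_surj_on_of_card_le (s := P.parts) (t := Q.parts)
        (fun B _ => f B) (fun B hB => (hf B hB).1)
        (fun D hD => by obtain ⟨B, hB, hfB⟩ := hsurj D hD; exact ⟨B, hB, hfB⟩)
        (le_of_eq h.symm) h₁ h₂ h12
    have hQP : Q.parts ⊆ P.parts := by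
      intro D hD
      obtain ⟨B₀, hB₀, hfB₀⟩ := hsurj D hD
      have hDB : D = B₀ := by
        apply Finset.Subset.antisymm
        · intro a haD
          have hpa := P.part_mem.2 (Finset.mem_univ a)
          have h1 := hf _ hpa
          have : f (P.part a) = D :=
            Q.eq_of_mem_parts h1.1 hD (h1.2 (P.mem_part (Finset.mem_univ a))) haD
          have := hinj hpa hB₀ (this.trans hfB₀.symm)
          exact this ▸ P.mem_part (Finset.mem_univ a)
        · exact hfB₀ ▸ (hf B₀ hB₀).2
      exact hDB ▸ hB₀
    exact Finpartition.ext (Finset.eq_of_subset_of_card_le hQP h.ge).symm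

lemma card_lt_of_lt {x y : VPart n s} (h : x < y) : y.P.parts.card < x.P.parts.card := by
  refine parts_card_lt h.le.1 fun hP => h.ne (eq_of_le_of_P_eq h.le hP) 

lemma one_le_parts_card (hn : 0 < n) (x : VPart n s) : 1 ≤ x.P.parts.card := by
  haveI : Nonempty (Fin n) := ⟨⟨0, hn⟩⟩
  exact Finset.card_pos.2 (x.P.parts_nonempty (Finset.univ_nonempty).ne_empty)

lemma parts_card_le (x : VPart n s) : x.P.parts.card ≤ n := by
  have := x.P.card_parts_le_card
  simpa using this

lemma partOf_mem (x : VPart n s) (k : Fin n) : x.partOf k ∈ x.P.parts :=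
  x.P.part_mem.2 (Finset.mem_univ k)

lemma mem_partOf (x : VPart n s) (k : Fin n) : k ∈ x.partOf k :=
  x.P.mem_part (Finset.mem_univ k)

lemma filter_lt_card_lt (x : VPart n s) (k : Fin n) :
    ((x.partOf k).filter (· < k)).card < (x.partOf k).card := by
  refine Finset.card_lt_card ?_
  refine (Finset.ssubset_iff_of_subset (Finset.filter_subset _ _)).2
    ⟨k, mem_partOf x k, by simp⟩

lemma atomWord_mem (x : VPart n s) (i : Fin s) (k : Fin n) :
    x.atomWord i k ∈ x.w i (x.partOf k) := by
  unfold atomWord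
  have hlen : ((x.w i (x.partOf k)).sort (· ≤ ·)).length = (x.partOf k).card := by
    rw [Finset.length_sort, x.card_w i _ (partOf_mem x k)]
  have hr : ((x.partOf k).filter (· < k)).card <
      ((x.w i (x.partOf k)).sort (· ≤ ·)).length := hlen ▸ filter_lt_card_lt x k
  rw [List.getD_eq_getElem _ _ hr]
  exact (Finset.mem_sort _).1 (List.getElem_mem hr)

lemma atomWord_inj (x : VPart n s) (i : Fin s) : Function.Injective (x.atomWord i) := by
  have key : ∀ a b : Fin n, x.partOf a = x.partOf b → a < b →
      x.atomWord i a ≠ x.atomWord i b := by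
    intro a b hpart hab
    unfold atomWord
    rw [hpart]
    have hlen : ((x.w i (x.partOf b)).sort (· ≤ ·)).length = (x.partOf b).card := by
      rw [Finset.length_sort, x.card_w i _ (partOf_mem x b)]
    have hrb : ((x.partOf b).filter (· < b)).card <
        ((x.w i (x.partOf b)).sort (· ≤ ·)).length := hlen ▸ filter_lt_card_lt x b
    have hlt : ((x.partOf b).filter (· < a)).card < ((x.partOf b).filter (· < b)).card := by
      refine Finset.card_lt_card ?_
      refine (Finset.ssubset_iff_of_subset
        (fun c hc => Finset.mem_filter.2 ⟨(Finset.mem_filter.1 hc).1,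
          lt_trans (Finset.mem_filter.1 hc).2 hab⟩)).2 ⟨a, ?_, by simp⟩
      exact Finset.mem_filter.2 ⟨hpart ▸ mem_partOf x a, hab⟩
    have hra : ((x.partOf b).filter (· < a)).card <
        ((x.w i (x.partOf b)).sort (· ≤ ·)).length := lt_trans hlt hrb
    rw [List.getD_eq_getElem _ _ hra, List.getD_eq_getElem _ _ hrb]
    intro hEq
    have := (List.Nodup.getElem_inj_iff (Finset.sort_nodup _ _)).1 hEq
    omega
  intro a b hEq
  by_contra hne
  by_cases hpart : x.partOf a = x.partOf b
  · rcases lt_or_gt_of_ne hne with h | h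
    · exact key a b hpart h hEq
    · exact key b a hpart.symm h hEq.symm
  · have h1 := atomWord_mem x i a
    have h2 := atomWord_mem x i b
    rw [hEq] at h1
    exact (Finset.disjoint_left.1
      (w_disj x i (partOf_mem x a) (partOf_mem x b) hpart) h1) h2

lemma atomWord_surj (x : VPart n s) (i : Fin s) : Function.Surjective (x.atomWord i) :=
  Finite.injective_iff_surjective.1 (atomWord_inj x i)

/-- the discrete (atomic) vector partition below `x` -/
def atomOf (x : VPart n s) : VPart n s where
  P := ⊥
  w := fun i B =>
    if B ∈ (⊥ : Finpartition (Finset.univ : Finset (Fin n))).parts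
    then B.image (x.atomWord i) else ∅
  card_w := by
    intro i B hB
    simp only [if_pos hB, Finset.card_image_of_injective _ (atomWord_inj x i)]
  part_w := by
    intro i a
    obtain ⟨k, hk⟩ := atomWord_surj x i a
    have hmem : ({k} : Finset (Fin n)) ∈ (⊥ : Finpartition (Finset.univ : Finset (Fin n))).parts :=
      Finpartition.mem_bot_iff.2 ⟨k, Finset.mem_univ k, rfl⟩
    refine ⟨{k}, ⟨hmem, ?_⟩, ?_⟩
    · simp only [if_pos hmem, Finset.image_singleton, Finset.mem_singleton]
      exact hk.symm
    · rintro B ⟨hB, haB⟩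
      simp only [if_pos hB] at haB
      obtain ⟨k', _, hkB⟩ := Finpartition.mem_bot_iff.1 hB
      subst hkB
      rw [Finset.image_singleton, Finset.mem_singleton] at haB
      have : k' = k := atomWord_inj x i (by rw [← haB, hk])
      rw [this]
  w_junk := fun i B hB => if_neg hB

lemma atomOf_le (x : VPart n s) : atomOf x ≤ x := by
  refine ⟨bot_le, ?_⟩
  intro i B hB B' hB' hsub
  obtain ⟨k, _, hkB⟩ := Finpartition.mem_bot_iff.1 hB
  subst hkB
  have hkB' : k ∈ B' := hsub (Finset.mem_singleton_self k)
  have hB'eq : x.partOf k = B' := x.P.part_eq_of_mem hB' hkB'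
  have hw : (atomOf x).w i {k} = Finset.image (x.atomWord i) {k} := if_pos hB
  rw [hw, Finset.image_singleton, Finset.singleton_subset_iff, ← hB'eq]
  exact atomWord_mem x i k

lemma atomOf_parts_card (x : VPart n s) : (atomOf x).P.parts.card = n := by
  show (⊥ : Finpartition (Finset.univ : Finset (Fin n))).parts.card = n
  rw [Finpartition.card_bot]
  simp

lemma ne_union_of_ne {x : VPart n s} {B1 C : Finset (Fin n)} (B2 : Finset (Fin n))
    (h1 : B1 ∈ x.P.parts) (hC : C ∈ x.P.parts) (hC1 : C ≠ B1) : C ≠ B1 ∪ B2 := by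
  rintro rfl
  obtain ⟨b, hb⟩ := x.P.nonempty_of_mem_parts h1
  exact hC1 (x.P.eq_of_mem_parts hC h1 (Finset.subset_union_left hb) hb)

/-- the label function for the merge of two parts -/
def mergeW (x : VPart n s) (B1 B2 : Finset (Fin n)) (i : Fin s) (C : Finset (Fin n)) :
    Finset (Fin n) :=
  if C = B1 ∪ B2 then x.w i B1 ∪ x.w i B2 else if C = B1 ∨ C = B2 then ∅ else x.w i C

lemma mergeW_union {x : VPart n s} {B1 B2 : Finset (Fin n)} {i : Fin s} :
    mergeW x B1 B2 i (B1 ∪ B2) = x.w i B1 ∪ x.w i B2 := if_pos rfl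

lemma mergeW_other {x : VPart n s} {B1 B2 C : Finset (Fin n)} {i : Fin s}
    (hCu : C ≠ B1 ∪ B2) (hC1 : C ≠ B1) (hC2 : C ≠ B2) :
    mergeW x B1 B2 i C = x.w i C := by
  rw [mergeW, if_neg hCu, if_neg (by push_neg; exact ⟨hC1, hC2⟩)]

/-- merging two parts of `x` -/
def merge (x : VPart n s) (B1 B2 : Finset (Fin n)) (h1 : B1 ∈ x.P.parts)
    (h2 : B2 ∈ x.P.parts) (hne : B1 ≠ B2) : VPart n s where
  P := { parts := insert (B1 ∪ B2) ((x.P.parts.erase B1).erase B2)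
         supIndep := by
           rw [Finset.supIndep_iff_pairwiseDisjoint]
           intro C hC C' hC' hCC'
           simp only [Finset.coe_insert, Set.mem_insert_iff, Finset.mem_coe,
             Finset.mem_erase] at hC hC'
           rcases hC with rfl | ⟨hC2, hC1, hC⟩
           · rcases hC' with rfl | ⟨hC'2, hC'1, hC'⟩
             · exact absurd rfl hCC'
             · simp only [Function.onFun, id_eq, Finset.disjoint_union_left]
               exact ⟨x.P.disjoint h1 hC' (Ne.symm hC'1), x.P.disjoint h2 hC' (Ne.symm hC'2)⟩
           · rcases hC' with rfl | ⟨hC'2, hC'1, hC'⟩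
             · simp only [Function.onFun, id_eq, Finset.disjoint_union_right]
               exact ⟨x.P.disjoint hC h1 hC1, x.P.disjoint hC h2 hC2⟩
             · exact x.P.disjoint hC hC' hCC'
         sup_parts := by
           have hrw : x.P.parts = insert B1 (insert B2 ((x.P.parts.erase B1).erase B2)) := by
             rw [Finset.insert_erase (Finset.mem_erase.2 ⟨Ne.symm hne, h2⟩),
               Finset.insert_erase h1]
           have h := x.P.sup_parts
           rw [hrw, Finset.sup_insert, Finset.sup_insert] at h
           rw [Finset.sup_insert]
           refine Eq.trans ?_ h
           ext a
           simp only [id_eq, Finset.sup_eq_union, Finset.mem_union]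
           tauto
         bot_notMem := by
           simp only [Finset.mem_insert, Finset.mem_erase, not_or, Finset.bot_eq_empty]
           refine ⟨?_, fun h => x.P.bot_notMem (by
             simpa using h.2.2)⟩
           intro hbot
           obtain ⟨b, hb⟩ := x.P.nonempty_of_mem_parts h1
           exact absurd (hbot ▸ Finset.mem_union_left _ hb) (Finset.notMem_empty b) }
  w := mergeW x B1 B2
  card_w := by
    intro i C hC
    simp only [Finset.mem_insert, Finset.mem_erase] at hC
    rcases hC with rfl | ⟨hC2, hC1, hC⟩
    · rw [mergeW_union, Finset.card_union_of_disjoint (w_disj x i h1 h2 hne),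
        Finset.card_union_of_disjoint (show Disjoint B1 B2 from x.P.disjoint h1 h2 hne),
        x.card_w i B1 h1, x.card_w i B2 h2]
    · rw [mergeW_other (ne_union_of_ne B2 h1 hC hC1) hC1 hC2]
      exact x.card_w i C hC
  part_w := by
    intro i a
    obtain ⟨B, ⟨hB, haB⟩, huniq⟩ := x.part_w i a
    by_cases hBcase : B = B1 ∨ B = B2
    · refine ⟨B1 ∪ B2, ⟨Finset.mem_insert_self _ _, ?_⟩, ?_⟩
      · rw [mergeW_union, Finset.mem_union]
        rcases hBcase with rfl | rfl
        · exact Or.inl haB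
        · exact Or.inr haB
      · rintro C ⟨hC, haC⟩
        simp only [Finset.mem_insert, Finset.mem_erase] at hC
        rcases hC with rfl | ⟨hC2, hC1, hC⟩
        · rfl
        · exfalso
          rw [mergeW_other (ne_union_of_ne B2 h1 hC hC1) hC1 hC2] at haC
          have := huniq C ⟨hC, haC⟩
          rcases hBcase with rfl | rfl
          · exact hC1 this
          · exact hC2 this
    · push_neg at hBcase
      have hBmem : B ∈ insert (B1 ∪ B2) ((x.P.parts.erase B1).erase B2) :=
        Finset.mem_insert_of_mem (Finset.mem_erase.2 ⟨hBcase.2,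
          Finset.mem_erase.2 ⟨hBcase.1, hB⟩⟩)
      refine ⟨B, ⟨hBmem, ?_⟩, ?_⟩
      · rw [mergeW_other (ne_union_of_ne B2 h1 hB hBcase.1) hBcase.1 hBcase.2]
        exact haB
      · rintro C ⟨hC, haC⟩
        simp only [Finset.mem_insert, Finset.mem_erase] at hC
        rcases hC with rfl | ⟨hC2, hC1, hC⟩
        · rw [mergeW_union, Finset.mem_union] at haC
          exfalso
          rcases haC with h | h
          · exact hBcase.1 (huniq B1 ⟨h1, h⟩).symm
          · exact hBcase.2 (huniq B2 ⟨h2, h⟩).symm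
        · rw [mergeW_other (ne_union_of_ne B2 h1 hC hC1) hC1 hC2] at haC
          exact huniq C ⟨hC, haC⟩
  w_junk := by
    intro i C hC
    simp only [Finset.mem_insert, Finset.mem_erase, not_or, not_and] at hC
    rw [mergeW, if_neg hC.1]
    by_cases h : C = B1 ∨ C = B2
    · rw [if_pos h]
    · push_neg at h
      rw [if_neg (by push_neg; exact h)]
      exact x.w_junk i C fun hmem => (hC.2 h.2 h.1) hmem

end VPart

end Aux

section Aux2

namespace VPart

variable {n s : ℕ}

lemma merge_parts (x : VPart n s) {B1 B2 : Finset (Fin n)} (h1 : B1 ∈ x.P.parts)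
    (h2 : B2 ∈ x.P.parts) (hne : B1 ≠ B2) :
    (merge x B1 B2 h1 h2 hne).P.parts = insert (B1 ∪ B2) ((x.P.parts.erase B1).erase B2) := rfl

lemma le_merge (x : VPart n s) {B1 B2 : Finset (Fin n)} (h1 : B1 ∈ x.P.parts)
    (h2 : B2 ∈ x.P.parts) (hne : B1 ≠ B2) : x ≤ merge x B1 B2 h1 h2 hne := by
  constructor
  · intro C hC
    by_cases hC1 : C = B1
    · exact ⟨B1 ∪ B2, Finset.mem_insert_self _ _, hC1 ▸ Finset.subset_union_left⟩
    by_cases hC2 : C = B2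
    · exact ⟨B1 ∪ B2, Finset.mem_insert_self _ _, hC2 ▸ Finset.subset_union_right⟩
    · exact ⟨C, Finset.mem_insert_of_mem (Finset.mem_erase.2 ⟨hC2,
        Finset.mem_erase.2 ⟨hC1, hC⟩⟩), subset_rfl⟩
  · intro i B hB C hC hBC
    simp only [merge_parts, Finset.mem_insert, Finset.mem_erase] at hC
    rcases hC with rfl | ⟨hC2, hC1, hC⟩
    · show x.w i B ⊆ mergeW x B1 B2 i (B1 ∪ B2)
      rw [mergeW_union]
      by_cases hB1 : B = B1
      · subst hB1; exact Finset.subset_union_left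
      by_cases hB2 : B = B2
      · subst hB2; exact Finset.subset_union_right
      · exfalso
        obtain ⟨b, hb⟩ := x.P.nonempty_of_mem_parts hB
        rcases Finset.mem_union.1 (hBC hb) with h | h
        · exact hB1 (x.P.eq_of_mem_parts hB h1 hb h)
        · exact hB2 (x.P.eq_of_mem_parts hB h2 hb h)
    · obtain ⟨b, hb⟩ := x.P.nonempty_of_mem_parts hB
      obtain rfl : B = C := x.P.eq_of_mem_parts hB hC hb (hBC hb)
      show x.w i B ⊆ mergeW x B1 B2 i B
      rw [mergeW_other (ne_union_of_ne B2 h1 hC hC1) hC1 hC2]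

lemma merge_parts_card (x : VPart n s) {B1 B2 : Finset (Fin n)} (h1 : B1 ∈ x.P.parts)
    (h2 : B2 ∈ x.P.parts) (hne : B1 ≠ B2) :
    (merge x B1 B2 h1 h2 hne).P.parts.card = x.P.parts.card - 1 := by
  have hnotmem : B1 ∪ B2 ∉ (x.P.parts.erase B1).erase B2 := by
    intro hmem
    have h := Finset.mem_erase.1 hmem
    have h' := Finset.mem_erase.1 h.2
    exact (ne_union_of_ne B2 h1 h'.2 h'.1) rfl
  rw [merge_parts, Finset.card_insert_of_notMem hnotmem,
    Finset.card_erase_of_mem (Finset.mem_erase.2 ⟨Ne.symm hne, h2⟩),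
    Finset.card_erase_of_mem h1]
  have : 1 < x.P.parts.card := Finset.one_lt_card.2 ⟨B1, h1, B2, h2, hne⟩
  omega

lemma merge_le {x y : VPart n s} {B1 B2 : Finset (Fin n)} (h1 : B1 ∈ x.P.parts)
    (h2 : B2 ∈ x.P.parts) (hne : B1 ≠ B2) (hxy : x ≤ y) {D : Finset (Fin n)}
    (hD : D ∈ y.P.parts) (hD1 : B1 ⊆ D) (hD2 : B2 ⊆ D) :
    merge x B1 B2 h1 h2 hne ≤ y := by
  constructor
  · intro C hC
    simp only [merge_parts, Finset.mem_insert, Finset.mem_erase] at hC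
    rcases hC with rfl | ⟨hC2, hC1, hC⟩
    · exact ⟨D, hD, Finset.union_subset hD1 hD2⟩
    · exact hxy.1 hC
  · intro i C hC D' hD' hCD'
    simp only [merge_parts, Finset.mem_insert, Finset.mem_erase] at hC
    rcases hC with rfl | ⟨hC2, hC1, hC⟩
    · show mergeW x B1 B2 i (B1 ∪ B2) ⊆ y.w i D'
      rw [mergeW_union]
      exact Finset.union_subset
        (hxy.2 i B1 h1 D' hD' (Finset.subset_union_left.trans hCD'))
        (hxy.2 i B2 h2 D' hD' (Finset.subset_union_right.trans hCD'))
    · show mergeW x B1 B2 i C ⊆ y.w i D'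
      rw [mergeW_other (ne_union_of_ne B2 h1 hC hC1) hC1 hC2]
      exact hxy.2 i C hC D' hD' hCD'

lemma exists_between {x y : VPart n s} (hxy : x ≤ y)
    (hcard : y.P.parts.card + 1 < x.P.parts.card) : ∃ z : VPart n s, x < z ∧ z < y := by
  classical
  set f : Finset (Fin n) → Finset (Fin n) :=
    fun B => if h : B.Nonempty then y.P.part h.choose else ∅ with hf_def
  have hf : ∀ B ∈ x.P.parts, f B ∈ y.P.parts ∧ B ⊆ f B := by
    intro B hB
    have hBne : B.Nonempty := x.P.nonempty_of_mem_parts hB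
    obtain ⟨D, hD, hBD⟩ := hxy.1 hB
    have heq : f B = D := by
      rw [hf_def]; simp only [dif_pos hBne]
      exact y.P.part_eq_of_mem hD (hBD hBne.choose_spec)
    rw [heq]; exact ⟨hD, hBD⟩
  obtain ⟨B1, hB1, B2, hB2, hne, hfeq⟩ :=
    Finset.exists_ne_map_eq_of_card_lt_of_maps_to (by omega) (fun B hB => (hf B hB).1)
  refine ⟨merge x B1 B2 hB1 hB2 hne, ?_, ?_⟩
  · refine lt_of_le_of_ne (le_merge x hB1 hB2 hne) fun h => ?_
    have hzc := merge_parts_card x hB1 hB2 hne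
    rw [← h] at hzc
    omega
  · refine lt_of_le_of_ne (merge_le hB1 hB2 hne hxy (hf B1 hB1).1 (hf B1 hB1).2
      (by rw [hfeq]; exact (hf B2 hB2).2)) fun h => ?_
    have hzc := merge_parts_card x hB1 hB2 hne
    rw [h] at hzc
    omega

lemma atomOf_lt {x : VPart n s} (h : x.P.parts.card < n) : atomOf x < x := by
  refine lt_of_le_of_ne (atomOf_le x) fun heq => ?_
  have hc := atomOf_parts_card x
  rw [heq] at hc
  omega

lemma parts_top_eq (hn : 0 < n) :
    (⊤ : Finpartition (Finset.univ : Finset (Fin n))).parts = {Finset.univ} := by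
  haveI : Nonempty (Fin n) := ⟨⟨0, hn⟩⟩
  have h1 := Finpartition.parts_top_subset (Finset.univ : Finset (Fin n))
  rcases Finset.subset_singleton_iff.1 h1 with h | h
  · exfalso
    have h2 := (⊤ : Finpartition (Finset.univ : Finset (Fin n))).parts_nonempty
      (by simpa using (Finset.univ_nonempty (α := Fin n)).ne_empty)
    rw [h] at h2
    exact h2.ne_empty rfl
  · exact h

/-- the greatest vector partition -/
def topV (hn : 0 < n) : VPart n s where
  P := ⊤
  w := fun _ B =>
    if B ∈ (⊤ : Finpartition (Finset.univ : Finset (Fin n))).parts then Finset.univ else ∅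
  card_w := by
    intro i B hB
    have hBu : B = Finset.univ := by
      rw [parts_top_eq hn] at hB; exact Finset.mem_singleton.1 hB
    subst hBu
    simp only [if_pos hB]
  part_w := by
    intro i a
    have hmem : Finset.univ ∈ (⊤ : Finpartition (Finset.univ : Finset (Fin n))).parts := by
      rw [parts_top_eq hn]; exact Finset.mem_singleton_self _
    refine ⟨Finset.univ, ⟨hmem, by simp only [if_pos hmem]; exact Finset.mem_univ a⟩, ?_⟩
    rintro B ⟨hB, -⟩
    rw [parts_top_eq hn] at hB; exact Finset.mem_singleton.1 hB
  w_junk := fun i B hB => if_neg hB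

lemma le_topV (hn : 0 < n) (y : VPart n s) : y ≤ topV hn := by
  refine ⟨le_top, ?_⟩
  intro i B hB C hC hBC
  have hw : (topV (n := n) (s := s) hn).w i C = Finset.univ := if_pos hC
  rw [hw]
  exact Finset.subset_univ _

lemma topV_parts_card (hn : 0 < n) : (topV (n := n) (s := s) hn).P.parts.card = 1 := by
  show (⊤ : Finpartition (Finset.univ : Finset (Fin n))).parts.card = 1
  rw [parts_top_eq hn]
  simp

lemma topV_w (hn : 0 < n) (i : Fin s) (B : Finset (Fin n))
    (hB : B ∈ (topV (n := n) (s := s) hn).P.parts) :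
    (topV (n := n) (s := s) hn).w i B = Finset.univ := if_pos hB

/-- rank function on `Π_{n,s+1}` -/
def rk (n s : ℕ) : WithBot (VPart n s) → ℕ :=
  WithBot.recBotCoe 0 (fun x => n + 1 - x.P.parts.card)

lemma rk_bot : rk n s ⊥ = 0 := rfl

lemma rk_coe (x : VPart n s) : rk n s x = n + 1 - x.P.parts.card := rfl

lemma rk_lt_of_lt (hn : 0 < n) {a b : WithBot (VPart n s)} (hab : a < b) :
    rk n s a < rk n s b := by
  induction b using WithBot.recBotCoe with
  | bot => exact absurd hab (by simp)
  | coe y =>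
    induction a using WithBot.recBotCoe with
    | bot =>
      have h1 := parts_card_le y
      rw [rk_bot, rk_coe]
      omega
    | coe x =>
      have hxy : x < y := WithBot.coe_lt_coe.1 hab
      have h1 := card_lt_of_lt hxy
      have h2 := parts_card_le x
      rw [rk_coe, rk_coe]
      omega

lemma rk_cover (hn : 0 < n) {a b : WithBot (VPart n s)} (hab : a < b)
    (hno : ∀ z, ¬(a < z ∧ z < b)) : rk n s b = rk n s a + 1 := by
  induction b using WithBot.recBotCoe with
  | bot => exact absurd hab (by simp)
  | coe y =>
    induction a using WithBot.recBotCoe with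
    | bot =>
      have hle := parts_card_le y
      rcases lt_or_eq_of_le hle with h | h
      · exact absurd ⟨WithBot.bot_lt_coe _, WithBot.coe_lt_coe.2 (atomOf_lt h)⟩
          (hno (atomOf y))
      · rw [rk_bot, rk_coe, h]
        omega
    | coe x =>
      have hxy : x < y := WithBot.coe_lt_coe.1 hab
      have h1 := card_lt_of_lt hxy
      have h2 := parts_card_le x
      have h3 := one_le_parts_card hn y
      by_cases hgap : y.P.parts.card + 1 < x.P.parts.card
      · obtain ⟨z, hz1, hz2⟩ := exists_between hxy.le hgap
        exact absurd ⟨WithBot.coe_lt_coe.2 hz1, WithBot.coe_lt_coe.2 hz2⟩ (hno z)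
      · rw [rk_coe, rk_coe]
        omega

end VPart

end Aux2

/-- `Π_{n,s+1}` is graded: it is bounded, with greatest element
`([n],...,[n])`, and every maximal chain has the same length `n`
(i.e. has `n+1` elements). -/
theorem statement2 (n s : ℕ) (hn : 1 ≤ n) :
    (∃ x : VPart n s, x.P = ⊤ ∧ (∀ (i : Fin s), ∀ B ∈ x.P.parts, x.w i B = Finset.univ) ∧
      IsTop (x : WithBot (VPart n s))) ∧
    ∀ S : Finset (WithBot (VPart n s)),
      IsMaxChain (fun a b => a ≤ b) (S : Set (WithBot (VPart n s))) -> S.card = n + 1 := by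
  classical
  have hn' : 0 < n := hn
  set t : VPart n s := VPart.topV hn' with ht
  have htop : IsTop ((t : WithBot (VPart n s))) := by
    intro b
    induction b using WithBot.recBotCoe with
    | bot => exact bot_le
    | coe y => exact WithBot.coe_le_coe.2 (VPart.le_topV hn' y)
  constructor
  · exact ⟨t, rfl, fun i B hB => VPart.topV_w hn' i B hB, htop⟩
  · intro S hS
    have hbot_mem : (⊥ : WithBot (VPart n s)) ∈ S := by
      by_contra hmem
      have hchain : IsChain (fun a b => a ≤ b) (insert ⊥ (S : Set (WithBot (VPart n s)))) :=
        hS.1.insert (fun b _ _ => Or.inl bot_le)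
      have heq := hS.2 hchain (Set.subset_insert _ _)
      exact hmem (Finset.mem_coe.1 (heq.symm ▸ Set.mem_insert _ _))
    have htop_mem : ((t : WithBot (VPart n s))) ∈ S := by
      by_contra hmem
      have hchain : IsChain (fun a b => a ≤ b)
          (insert (t : WithBot (VPart n s)) (S : Set (WithBot (VPart n s)))) :=
        hS.1.insert (fun b _ _ => Or.inr (htop b))
      have heq := hS.2 hchain (Set.subset_insert _ _)
      exact hmem (Finset.mem_coe.1 (heq.symm ▸ Set.mem_insert _ _))
    have hinj : Set.InjOn (VPart.rk n s) ↑S := by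
      intro a ha b hb hab
      by_contra hne
      rcases hS.1 ha hb hne with h | h
      · have := VPart.rk_lt_of_lt hn' (lt_of_le_of_ne h hne)
        omega
      · have := VPart.rk_lt_of_lt hn' (lt_of_le_of_ne h (Ne.symm hne))
        omega
    have hrkt : VPart.rk n s (t : WithBot (VPart n s)) = n := by
      rw [VPart.rk_coe, VPart.topV_parts_card hn']
      omega
    have himage : S.image (VPart.rk n s) = Finset.range (n + 1) := by
      apply Finset.Subset.antisymm
      · intro r hr
        obtain ⟨a, ha, rfl⟩ := Finset.mem_image.1 hr
        rw [Finset.mem_range]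
        induction a using WithBot.recBotCoe with
        | bot => rw [VPart.rk_bot]; omega
        | coe x =>
          have := VPart.one_le_parts_card hn' x
          rw [VPart.rk_coe]
          omega
      · intro j hj
        rw [Finset.mem_range] at hj
        rw [Finset.mem_image]
        by_cases hj0 : j = 0
        · exact ⟨⊥, hbot_mem, by rw [hj0, VPart.rk_bot]⟩
        · set A := S.filter (fun u => VPart.rk n s u < j) with hA
          set B := S.filter (fun u => j ≤ VPart.rk n s u) with hB
          have hAne : A.Nonempty :=
            ⟨⊥, Finset.mem_filter.2 ⟨hbot_mem, by rw [VPart.rk_bot]; omega⟩⟩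
          have hBne : B.Nonempty :=
            ⟨↑t, Finset.mem_filter.2 ⟨htop_mem, by rw [hrkt]; omega⟩⟩
          obtain ⟨a, haA, hamax'⟩ := Finset.exists_maximal hAne
          have hamax : ∀ u ∈ A, ¬ a < u := fun u hu h => lt_irrefl a (h.trans_le (hamax' hu h.le))
          obtain ⟨b, hbB, hbmin'⟩ := Finset.exists_minimal hBne
          have hbmin : ∀ u ∈ B, ¬ u < b := fun u hu h => lt_irrefl b ((hbmin' hu h.le).trans_lt h)
          have haS := (Finset.mem_filter.1 haA).1
          have hbS := (Finset.mem_filter.1 hbB).1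
          have hra := (Finset.mem_filter.1 haA).2
          have hrb := (Finset.mem_filter.1 hbB).2
          have hle_a : ∀ u ∈ A, u ≤ a := by
            intro u hu
            by_cases hua : u = a
            · exact hua.le
            rcases hS.1 (Finset.mem_coe.2 (Finset.mem_filter.1 hu).1)
              (Finset.mem_coe.2 haS) hua with h | h
            · exact h
            · exact absurd (lt_of_le_of_ne h (Ne.symm hua)) (hamax u hu)
          have hb_le : ∀ u ∈ B, b ≤ u := by
            intro u hu
            by_cases hub : u = b
            · exact hub.ge
            rcases hS.1 (Finset.mem_coe.2 (Finset.mem_filter.1 hu).1)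
              (Finset.mem_coe.2 hbS) hub with h | h
            · exact absurd (lt_of_le_of_ne h hub) (hbmin u hu)
            · exact h
          have hab : a < b := by
            have hne : a ≠ b := fun h => by rw [h] at hra; omega
            rcases hS.1 (Finset.mem_coe.2 haS) (Finset.mem_coe.2 hbS) hne with h | h
            · exact lt_of_le_of_ne h hne
            · exfalso
              have := VPart.rk_lt_of_lt hn' (lt_of_le_of_ne h (Ne.symm hne))
              omega
          have hcover : ∀ z, ¬(a < z ∧ z < b) := by
            rintro z ⟨h1, h2⟩
            have hzS : z ∉ (S : Set (WithBot (VPart n s))) := by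
              intro hz
              have hzS' := Finset.mem_coe.1 hz
              by_cases hzj : VPart.rk n s z < j
              · exact absurd (h1.trans_le (hle_a z (Finset.mem_filter.2 ⟨hzS', hzj⟩)))
                  (lt_irrefl a)
              · exact absurd ((hb_le z (Finset.mem_filter.2 ⟨hzS', not_lt.1 hzj⟩)).trans_lt h2)
                  (lt_irrefl b)
            have hchain2 : IsChain (fun a b => a ≤ b) (insert z ↑S) := by
              refine hS.1.insert fun u hu hne => ?_
              have huS := Finset.mem_coe.1 hu
              by_cases huj : VPart.rk n s u < j
              · exact Or.inr ((hle_a u (Finset.mem_filter.2 ⟨huS, huj⟩)).trans h1.le)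
              · exact Or.inl (h2.le.trans (hb_le u (Finset.mem_filter.2 ⟨huS, not_lt.1 huj⟩)))
            have heq := hS.2 hchain2 (Set.subset_insert _ _)
            exact hzS (heq.symm ▸ Set.mem_insert _ _)
          have hstep := VPart.rk_cover hn' hab hcover
          exact ⟨b, hbS, by omega⟩
    calc S.card = (S.image (VPart.rk n s)).card := (Finset.card_image_of_injOn hinj).symm
    _ = n + 1 := by rw [himage, Finset.card_range]
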